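/- (Case A.I.3a.) If M1 > N1, M2 = N1, and N1 > N2 ≥ 1, then Ph1 = Pi = {(d1,d2) ∈ ℝ² : d1 ≥ 0, 0 ≤ d2 ≤ N2, d1+d2 ≤ M2} and Ph2 = Pd. -/

import Mathlib

open Set

noncomputable section

/-- Bound L01 : 0 ≤ d1 ≤ min(M1,N1). -/
def L01 (M1 N1 : ℕ) (d : ℝ × ℝ) : Prop := 0 ≤ d.1 ∧ d.1 ≤ min (M1 : ℝ) (N1 : ℝ)

/-- Bound L02 : 0 ≤ d2 ≤ min(M2,N2). -/
def L02 (M2 N2 : ℕ) (d : ℝ × ℝ) : Prop := 0 ≤ d.2 ∧ d.2 ≤ min (M2 : ℝ) (N2 : ℝ)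

/-- Bound L1 : d1/min(N1+N2,M1) + d2/min(N2,M1) ≤ min(N2,M1+M2)/min(N2,M1). -/
def L1 (M1 M2 N1 N2 : ℕ) (d : ℝ × ℝ) : Prop :=
  d.1 / min ((N1 : ℝ) + (N2 : ℝ)) (M1 : ℝ) + d.2 / min (N2 : ℝ) (M1 : ℝ) ≤
    min (N2 : ℝ) ((M1 : ℝ) + (M2 : ℝ)) / min (N2 : ℝ) (M1 : ℝ)

/-- Bound L2 : d1/min(N1,M2) + d2/min(N1+N2,M2) ≤ min(N1,M1+M2)/min(N1,M2). -/
def L2 (M1 M2 N1 N2 : ℕ) (d : ℝ × ℝ) : Prop :=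
  d.1 / min (N1 : ℝ) (M2 : ℝ) + d.2 / min ((N1 : ℝ) + (N2 : ℝ)) (M2 : ℝ) ≤
    min (N1 : ℝ) ((M1 : ℝ) + (M2 : ℝ)) / min (N1 : ℝ) (M2 : ℝ)

/-- Bound L3 : d1+d2 ≤ min(M1+M2, N1+N2, max(M1,N2), max(M2,N1)). -/
def L3 (M1 M2 N1 N2 : ℕ) (d : ℝ × ℝ) : Prop :=
  d.1 + d.2 ≤
    min (min ((M1 : ℝ) + (M2 : ℝ)) ((N1 : ℝ) + (N2 : ℝ)))
      (min (max (M1 : ℝ) (N2 : ℝ)) (max (M2 : ℝ) (N1 : ℝ)))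

/-- Bound L4 : d1 + d2·(N1+2N2−M2)/N2 ≤ N1+N2. -/
def L4 (M2 N1 N2 : ℕ) (d : ℝ × ℝ) : Prop :=
  d.1 + d.2 * (((N1 : ℝ) + 2 * (N2 : ℝ) - (M2 : ℝ)) / (N2 : ℝ)) ≤ (N1 : ℝ) + (N2 : ℝ)

/-- Bound L5 : d2 + d1·(N2+2N1−M1)/N1 ≤ N1+N2. -/
def L5 (M1 N1 N2 : ℕ) (d : ℝ × ℝ) : Prop :=
  d.2 + d.1 * (((N2 : ℝ) + 2 * (N1 : ℝ) - (M1 : ℝ)) / (N1 : ℝ)) ≤ (N1 : ℝ) + (N2 : ℝ)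

/-- Condition 1 : M1 > N1+N2−M2 > N1 > N2 > M2 > N2(N2−M2)/(N1−M2). -/
def Cond1 (M1 M2 N1 N2 : ℕ) : Prop :=
  (M1 : ℝ) > (N1 : ℝ) + (N2 : ℝ) - (M2 : ℝ) ∧
  (N1 : ℝ) + (N2 : ℝ) - (M2 : ℝ) > (N1 : ℝ) ∧
  (N1 : ℝ) > (N2 : ℝ) ∧ (N2 : ℝ) > (M2 : ℝ) ∧
  (M2 : ℝ) > (N2 : ℝ) * ((N2 : ℝ) - (M2 : ℝ)) / ((N1 : ℝ) - (M2 : ℝ))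

/-- Condition 2 : M2 > N1+N2−M1 > N2 > N1 > M1 > N1(N1−M1)/(N2−M1). -/
def Cond2 (M1 M2 N1 N2 : ℕ) : Prop :=
  (M2 : ℝ) > (N1 : ℝ) + (N2 : ℝ) - (M1 : ℝ) ∧
  (N1 : ℝ) + (N2 : ℝ) - (M1 : ℝ) > (N2 : ℝ) ∧
  (N2 : ℝ) > (N1 : ℝ) ∧ (N1 : ℝ) > (M1 : ℝ) ∧
  (M1 : ℝ) > (N1 : ℝ) * ((N1 : ℝ) - (M1 : ℝ)) / ((N2 : ℝ) - (M1 : ℝ))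

/-- DoF outer-bound region under perfect and instantaneous CSIT. -/
def Pinst (M1 M2 N1 N2 : ℕ) : Set (ℝ × ℝ) :=
  {d | L01 M1 N1 d ∧ L02 M2 N2 d ∧ L3 M1 M2 N1 N2 d}

/-- DoF outer-bound region under hybrid CSIT 1. -/
def Ph1 (M1 M2 N1 N2 : ℕ) : Set (ℝ × ℝ) :=
  {d | L01 M1 N1 d ∧ L02 M2 N2 d ∧ L2 M1 M2 N1 N2 d ∧ L3 M1 M2 N1 N2 d ∧
    (Cond2 M1 M2 N1 N2 → L5 M1 N1 N2 d)}

/-- DoF outer-bound region under hybrid CSIT 2. -/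
def Ph2 (M1 M2 N1 N2 : ℕ) : Set (ℝ × ℝ) :=
  {d | L01 M1 N1 d ∧ L02 M2 N2 d ∧ L1 M1 M2 N1 N2 d ∧ L3 M1 M2 N1 N2 d ∧
    (Cond1 M1 M2 N1 N2 → L4 M2 N1 N2 d)}

/-- DoF outer-bound region under delayed CSIT. -/
def Pd (M1 M2 N1 N2 : ℕ) : Set (ℝ × ℝ) :=
  {d | L01 M1 N1 d ∧ L02 M2 N2 d ∧ L1 M1 M2 N1 N2 d ∧ L2 M1 M2 N1 N2 d ∧
    L3 M1 M2 N1 N2 d ∧ (Cond1 M1 M2 N1 N2 → L4 M2 N1 N2 d) ∧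
    (Cond2 M1 M2 N1 N2 → L5 M1 N1 N2 d)}

/-- Case A.I.3a: if M1 > N1, M2 = N1 and N1 > N2 ≥ 1, then
Ph1 = Pi = {(d1,d2) : d1 ≥ 0, 0 ≤ d2 ≤ N2, d1+d2 ≤ M2} and Ph2 = Pd. -/
theorem caseAI3a (M1 M2 N1 N2 : ℕ)
    (hM1 : 0 < M1) (hM2 : 0 < M2) (hN1 : 0 < N1) (hN2 : 1 ≤ N2)
    (h1 : M1 > N1) (h2 : M2 = N1) (h3 : N1 > N2) :
    Ph1 M1 M2 N1 N2 = Pinst M1 M2 N1 N2 ∧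
    Pinst M1 M2 N1 N2 =
      {d : ℝ × ℝ | 0 ≤ d.1 ∧ 0 ≤ d.2 ∧ d.2 ≤ (N2 : ℝ) ∧ d.1 + d.2 ≤ (M2 : ℝ)} ∧
    Ph2 M1 M2 N1 N2 = Pd M1 M2 N1 N2 := by
  subst h2
  have hN1R : (0:ℝ) < (M2:ℝ) := by exact_mod_cast hN1
  have hc1 : (M2:ℝ) < (M1:ℝ) := by exact_mod_cast h1
  have hc3 : (N2:ℝ) < (M2:ℝ) := by exact_mod_cast h3
  have hnc2 : ¬ Cond2 M1 M2 M2 N2 := by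
    rintro ⟨-, -, h, -⟩
    linarith
  have key3 : ∀ d : ℝ × ℝ, L3 M1 M2 M2 N2 d ↔ d.1 + d.2 ≤ (M2:ℝ) := by
    intro d
    unfold L3
    rw [max_self, max_eq_left (by linarith : (N2:ℝ) ≤ (M1:ℝ)),
        min_eq_right hc1.le,
        min_eq_right (by linarith : (M2:ℝ) + (N2:ℝ) ≤ (M1:ℝ) + (M2:ℝ)),
        min_eq_right (by linarith : (M2:ℝ) ≤ (M2:ℝ) + (N2:ℝ))]
  have key2 : ∀ d : ℝ × ℝ, L2 M1 M2 M2 N2 d ↔ d.1 + d.2 ≤ (M2:ℝ) := by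
    intro d
    unfold L2
    rw [min_self, min_eq_right (by linarith : (M2:ℝ) ≤ (M2:ℝ) + (N2:ℝ)),
        min_eq_left (by linarith : (M2:ℝ) ≤ (M1:ℝ) + (M2:ℝ)),
        div_self hN1R.ne', ← add_div, div_le_one hN1R]
  refine ⟨?_, ?_, ?_⟩
  · ext d
    simp only [Ph1, Pinst, Set.mem_setOf_eq, key2, key3]
    constructor
    · rintro ⟨a, b, -, c, -⟩; exact ⟨a, b, c⟩
    · rintro ⟨a, b, c⟩
      exact ⟨a, b, c, c, fun h => absurd h hnc2⟩
  · ext d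
    simp only [Pinst, Set.mem_setOf_eq, key3, L01, L02,
      min_eq_right hc1.le, min_eq_right hc3.le]
    constructor
    · rintro ⟨⟨a, -⟩, ⟨b, c⟩, e⟩; exact ⟨a, b, c, e⟩
    · rintro ⟨a, b, c, e⟩
      exact ⟨⟨a, by linarith⟩, ⟨b, c⟩, e⟩
  · ext d
    simp only [Ph2, Pd, Set.mem_setOf_eq, key2, key3]
    constructor
    · rintro ⟨a, b, c, e, f⟩
      exact ⟨a, b, c, e, e, f, fun h => absurd h hnc2⟩
    · rintro ⟨a, b, c, -, e, f, -⟩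
      exact ⟨a, b, c, e, f⟩
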